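/- Let S_r = {X ∈ ℝ^{d×d} : rank(X) ≤ r, ‖X‖_F = 1}. For every ε ∈ (0,1], there exists an ε-net of S_r with respect to the Frobenius norm of cardinality at most (9/ε)^{(2d+1)r}. -/

import Mathlib

/-- Frobenius inner product. -/
noncomputable def frobInner {d : ℕ} (X Y : Matrix (Fin d) (Fin d) ℝ) : ℝ :=
  ∑ i, ∑ j, X i j * Y i j

/-- Frobenius norm. -/
noncomputable def frobNorm {d : ℕ} (X : Matrix (Fin d) (Fin d) ℝ) : ℝ :=
  Real.sqrt (frobInner X X)

section Aux

open Metric MeasureTheory Module Finset Matrix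
open scoped ENNReal RealInnerProductSpace


lemma exists_net_of_subset_unitBall {E : Type*} [NormedAddCommGroup E] [NormedSpace ℝ E]
    [FiniteDimensional ℝ E] (S : Set E) (hS : S ⊆ closedBall (0:E) 1)
    {δ : ℝ} (hδ0 : 0 < δ) (hδ1 : δ ≤ 1) :
    ∃ N : Finset E, ↑N ⊆ S ∧ (N.card : ℝ) ≤ (3/δ) ^ (finrank ℝ E) ∧
      ∀ x ∈ S, ∃ y ∈ N, dist x y ≤ δ := by
  classical
  set n := finrank ℝ E with hn
  letI : MeasurableSpace E := borel E
  haveI : BorelSpace E := ⟨rfl⟩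
  set μ : Measure E := (finBasis ℝ E).addHaar with hμ
  have hB0 : 0 < μ (ball 0 1) := measure_ball_pos μ 0 one_pos
  have hBtop : μ (ball 0 1) < ⊤ := measure_ball_lt_top
  -- any δ-separated finite subset of S has cardinality at most (3/δ)^n
  have key : ∀ F : Finset E, ↑F ⊆ S → (∀ x ∈ F, ∀ y ∈ F, x ≠ y → δ < dist x y) →
      (F.card : ℝ) ≤ (3/δ) ^ n := by
    intro F hFS hsep
    have hdisj : (↑F : Set E).PairwiseDisjoint (fun x => closedBall x (δ/2)) := by
      intro x hx y hy hxy
      exact closedBall_disjoint_closedBall (by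
        have := hsep x hx y hy hxy; linarith)
    have hmeas : μ (⋃ x ∈ F, closedBall x (δ/2)) = ∑ x ∈ F, μ (closedBall x (δ/2)) :=
      measure_biUnion_finset hdisj (fun x _ => measurableSet_closedBall)
    have hsub : (⋃ x ∈ F, closedBall x (δ/2)) ⊆ closedBall (0:E) (1 + δ/2) := by
      intro z hz
      simp only [Set.mem_iUnion] at hz
      obtain ⟨x, hx, hz⟩ := hz
      have hx1 : dist x 0 ≤ 1 := mem_closedBall.1 (hS (hFS hx))
      have h2 : dist z x ≤ δ/2 := mem_closedBall.1 hz
      have h3 := dist_triangle z x 0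
      exact mem_closedBall.2 (by linarith)
    have hball : ∀ x : E, μ (closedBall x (δ/2)) = ENNReal.ofReal ((δ/2)^n) * μ (ball 0 1) :=
      fun x => μ.addHaar_closedBall x (by linarith)
    have hbig : μ (closedBall (0:E) (1 + δ/2)) = ENNReal.ofReal ((1+δ/2)^n) * μ (ball 0 1) :=
      μ.addHaar_closedBall 0 (by linarith)
    have hcount : (F.card : ℝ≥0∞) * ENNReal.ofReal ((δ/2)^n) * μ (ball 0 1)
        ≤ ENNReal.ofReal ((1+δ/2)^n) * μ (ball 0 1) := by
      calc (F.card : ℝ≥0∞) * ENNReal.ofReal ((δ/2)^n) * μ (ball 0 1)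
          = ∑ x ∈ F, μ (closedBall x (δ/2)) := by
            simp [hball, Finset.sum_const, nsmul_eq_mul, mul_assoc]
        _ = μ (⋃ x ∈ F, closedBall x (δ/2)) := hmeas.symm
        _ ≤ μ (closedBall (0:E) (1 + δ/2)) := measure_mono hsub
        _ = _ := hbig
    have hc1 : (F.card : ℝ≥0∞) * ENNReal.ofReal ((δ/2)^n) ≤ ENNReal.ofReal ((1+δ/2)^n) :=
      (ENNReal.mul_le_mul_iff_left hB0.ne' hBtop.ne).mp hcount
    have hc2 : ENNReal.ofReal ((F.card : ℝ) * (δ/2)^n) ≤ ENNReal.ofReal ((1+δ/2)^n) := by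
      rwa [ENNReal.ofReal_mul (by positivity), ENNReal.ofReal_natCast]
    have hc3 : (F.card : ℝ) * (δ/2)^n ≤ (1+δ/2)^n :=
      (ENNReal.ofReal_le_ofReal_iff (by positivity)).mp hc2
    have hpow : (0:ℝ) < (δ/2)^n := by positivity
    have hcard : (F.card : ℝ) ≤ ((1+δ/2)/(δ/2))^n := by
      rw [div_pow, le_div_iff₀ hpow]; exact hc3
    refine hcard.trans (pow_le_pow_left₀ (by positivity) ?_ n)
    rw [div_le_div_iff₀ (by linarith) hδ0]
    nlinarith
  -- pick a separated subset of maximal cardinality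
  set 𝒜 : Set ℕ := {k | ∃ F : Finset E, ↑F ⊆ S ∧
    (∀ x ∈ F, ∀ y ∈ F, x ≠ y → δ < dist x y) ∧ F.card = k} with h𝒜
  have h0 : (0:ℕ) ∈ 𝒜 := ⟨∅, by simp⟩
  have hbdd : BddAbove 𝒜 := by
    refine ⟨Nat.floor ((3/δ)^n), fun k hk => ?_⟩
    obtain ⟨F, h1, h2, h3⟩ := hk
    have := key F h1 h2
    rw [h3] at this
    exact Nat.le_floor this
  obtain ⟨F, hFS, hFsep, hFcard⟩ := Nat.sSup_mem ⟨0, h0⟩ hbdd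
  refine ⟨F, hFS, ?_, ?_⟩
  · exact key F hFS hFsep
  · intro x hx
    by_contra hcon
    push_neg at hcon
    have hxF : x ∉ F := by
      intro hxF
      have h := hcon x hxF
      rw [dist_self] at h
      linarith
    have hins : ↑(insert x F) ⊆ S := by
      intro y hy
      rcases Finset.mem_insert.1 (by exact_mod_cast hy) with h | h
      · exact h ▸ hx
      · exact hFS h
    have hsep' : ∀ a ∈ insert x F, ∀ b ∈ insert x F, a ≠ b → δ < dist a b := by
      intro a ha b hb hab
      rcases Finset.mem_insert.1 ha with ha' | ha' <;>
        rcases Finset.mem_insert.1 hb with hb' | hb'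
      · exact absurd (ha'.trans hb'.symm) hab
      · exact ha' ▸ hcon b hb'
      · rw [dist_comm]
        exact hb' ▸ hcon a ha'
      · exact hFsep a ha' b hb' hab
    have : (insert x F).card ∈ 𝒜 := ⟨insert x F, hins, hsep', rfl⟩
    have hle := le_csSup hbdd this
    rw [Finset.card_insert_of_notMem hxF, hFcard] at hle
    omega

/-- A rectangular matrix, bundled as a Euclidean-space vector. -/
noncomputable def fromMat {m n : ℕ} (A : Matrix (Fin m) (Fin n) ℝ) :
    EuclideanSpace ℝ (Fin m × Fin n) :=
  (WithLp.equiv 2 _).symm (fun p => A p.1 p.2)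

noncomputable def toMat {m n : ℕ} (f : EuclideanSpace ℝ (Fin m × Fin n)) :
    Matrix (Fin m) (Fin n) ℝ :=
  Matrix.of fun i j => f (i, j)

/-- Frobenius norm of a rectangular matrix. -/
noncomputable def fnorm {m n : ℕ} (A : Matrix (Fin m) (Fin n) ℝ) : ℝ := ‖fromMat A‖

lemma fromMat_apply {m n : ℕ} (A : Matrix (Fin m) (Fin n) ℝ) (p : Fin m × Fin n) :
    fromMat A p = A p.1 p.2 := rfl

lemma toMat_fromMat {m n : ℕ} (A : Matrix (Fin m) (Fin n) ℝ) : toMat (fromMat A) = A := rfl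

lemma fromMat_toMat {m n : ℕ} (f : EuclideanSpace ℝ (Fin m × Fin n)) : fromMat (toMat f) = f := rfl

lemma fromMat_sub {m n : ℕ} (A B : Matrix (Fin m) (Fin n) ℝ) :
    fromMat (A - B) = fromMat A - fromMat B := rfl

lemma fnorm_eq {m n : ℕ} (A : Matrix (Fin m) (Fin n) ℝ) :
    fnorm A = Real.sqrt (∑ i, ∑ j, A i j ^ 2) := by
  rw [fnorm, EuclideanSpace.norm_eq]
  congr 1
  rw [Fintype.sum_prod_type]
  exact Finset.sum_congr rfl fun i _ => Finset.sum_congr rfl fun j _ => by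
    rw [fromMat_apply, Real.norm_eq_abs, sq_abs]

lemma frobNorm_eq_fnorm {d : ℕ} (X : Matrix (Fin d) (Fin d) ℝ) : frobNorm X = fnorm X := by
  rw [fnorm_eq, frobNorm, frobInner]
  congr 1
  exact Finset.sum_congr rfl fun i _ => Finset.sum_congr rfl fun j _ => (sq (X i j)).symm

lemma fnorm_nonneg {m n : ℕ} (A : Matrix (Fin m) (Fin n) ℝ) : 0 ≤ fnorm A := norm_nonneg _

/-- column of a matrix as a Euclidean vector -/
noncomputable def colE {m n : ℕ} (A : Matrix (Fin m) (Fin n) ℝ) (j : Fin n) :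
    EuclideanSpace ℝ (Fin m) :=
  (WithLp.equiv 2 _).symm (fun i => A i j)

lemma colE_apply {m n : ℕ} (A : Matrix (Fin m) (Fin n) ℝ) (j : Fin n) (i : Fin m) :
    colE A j i = A i j := rfl

lemma fnorm_sq {m n : ℕ} (A : Matrix (Fin m) (Fin n) ℝ) :
    fnorm A ^ 2 = ∑ j, ‖colE A j‖ ^ 2 := by
  rw [fnorm_eq, Real.sq_sqrt (by positivity), Finset.sum_comm]
  refine Finset.sum_congr rfl fun j _ => ?_
  rw [EuclideanSpace.norm_eq, Real.sq_sqrt (by positivity)]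
  exact Finset.sum_congr rfl fun i _ => by rw [colE_apply, Real.norm_eq_abs, sq_abs]

lemma colE_mul {d r n : ℕ} (A : Matrix (Fin d) (Fin r) ℝ) (B : Matrix (Fin r) (Fin n) ℝ)
    (j : Fin n) :
    colE (A * B) j = (WithLp.equiv 2 _).symm (A.mulVec ((WithLp.equiv 2 _) (colE B j))) := by
  ext i
  simp [colE, Matrix.mul_apply, Matrix.mulVec, dotProduct]

/-- the matrix of a continuous linear map between Euclidean spaces -/
noncomputable def matC {r d : ℕ}
    (T : EuclideanSpace ℝ (Fin r) →L[ℝ] EuclideanSpace ℝ (Fin d)) :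
    Matrix (Fin d) (Fin r) ℝ :=
  Matrix.of fun i j => T (EuclideanSpace.single j 1) i

lemma matC_mulVec {r d : ℕ} (T : EuclideanSpace ℝ (Fin r) →L[ℝ] EuclideanSpace ℝ (Fin d))
    (v : EuclideanSpace ℝ (Fin r)) :
    (matC T).mulVec ((WithLp.equiv 2 _) v) = (WithLp.equiv 2 _) (T v) := by
  have hv : v = ∑ j, v j • EuclideanSpace.single j (1:ℝ) := by
    ext i
    rw [WithLp.ofLp_sum, Fintype.sum_apply]
    simp [EuclideanSpace.single_apply]
  funext i
  rw [show T v = T (∑ j, v j • EuclideanSpace.single j (1:ℝ)) from by rw [← hv], map_sum]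
  show ∑ j, matC T i j * v j = (∑ j, T (v j • EuclideanSpace.single j (1:ℝ))) i
  rw [WithLp.ofLp_sum, Fintype.sum_apply]
  refine Finset.sum_congr rfl fun j _ => ?_
  rw [_root_.map_smul]
  show T (EuclideanSpace.single j 1) i * v j = (v j • T (EuclideanSpace.single j (1:ℝ))) i
  rw [PiLp.smul_apply, smul_eq_mul, mul_comm]

lemma matC_sub {r d : ℕ} (T T' : EuclideanSpace ℝ (Fin r) →L[ℝ] EuclideanSpace ℝ (Fin d)) :
    matC (T - T') = matC T - matC T' := by
  funext i j
  show (T - T') (EuclideanSpace.single j 1) i = _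
  rw [ContinuousLinearMap.sub_apply, PiLp.sub_apply]
  rfl

lemma fnorm_mul_le {d r n : ℕ} {A : Matrix (Fin d) (Fin r) ℝ} {c : ℝ} (hc : 0 ≤ c)
    (h : ∀ v : EuclideanSpace ℝ (Fin r),
      ‖((WithLp.equiv 2 (Fin d → ℝ)).symm (A.mulVec ((WithLp.equiv 2 _) v)) :
        EuclideanSpace ℝ (Fin d))‖ ≤ c * ‖v‖)
    (B : Matrix (Fin r) (Fin n) ℝ) :
    fnorm (A * B) ≤ c * fnorm B := by
  have h2 : fnorm (A * B) ^ 2 ≤ (c * fnorm B) ^ 2 := by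
    rw [fnorm_sq, mul_pow, fnorm_sq, Finset.mul_sum]
    refine Finset.sum_le_sum fun j _ => ?_
    rw [colE_mul]
    calc ‖((WithLp.equiv 2 (Fin d → ℝ)).symm (A.mulVec ((WithLp.equiv 2 _) (colE B j))) :
          EuclideanSpace ℝ (Fin d))‖ ^ 2
        ≤ (c * ‖colE B j‖) ^ 2 := by
          have := h (colE B j)
          have hn : (0:ℝ) ≤ ‖((WithLp.equiv 2 (Fin d → ℝ)).symm
            (A.mulVec ((WithLp.equiv 2 _) (colE B j))) : EuclideanSpace ℝ (Fin d))‖ := norm_nonneg _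
          nlinarith
      _ = c ^ 2 * ‖colE B j‖ ^ 2 := by ring
  have h0 : (0:ℝ) ≤ c * fnorm B := mul_nonneg hc (fnorm_nonneg _)
  nlinarith [fnorm_nonneg (A * B)]

lemma fnorm_mul_eq {d r n : ℕ} {A : Matrix (Fin d) (Fin r) ℝ}
    (h : ∀ v : EuclideanSpace ℝ (Fin r),
      ‖((WithLp.equiv 2 (Fin d → ℝ)).symm (A.mulVec ((WithLp.equiv 2 _) v)) :
        EuclideanSpace ℝ (Fin d))‖ = ‖v‖)
    (B : Matrix (Fin r) (Fin n) ℝ) :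
    fnorm (A * B) = fnorm B := by
  have h2 : fnorm (A * B) ^ 2 = fnorm B ^ 2 := by
    rw [fnorm_sq, fnorm_sq]
    refine Finset.sum_congr rfl fun j _ => ?_
    rw [colE_mul, h]
  have := fnorm_nonneg (A * B)
  have := fnorm_nonneg B
  nlinarith

lemma exists_superset_finrank {V : Type*} [AddCommGroup V] [Module ℝ V] [FiniteDimensional ℝ V]
    (W : Submodule ℝ V) {r : ℕ} (h1 : finrank ℝ W ≤ r) (h2 : r ≤ finrank ℝ V) :
    ∃ W' : Submodule ℝ V, W ≤ W' ∧ finrank ℝ W' = r := by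
  obtain ⟨k, hk⟩ : ∃ k, r - finrank ℝ W = k := ⟨_, rfl⟩
  induction k generalizing W with
  | zero => exact ⟨W, le_rfl, by omega⟩
  | succ n ih =>
    have hlt : finrank ℝ W < r := by omega
    have hne : W ≠ ⊤ := by
      intro h
      rw [h, finrank_top] at hlt
      omega
    obtain ⟨v, -, hv⟩ := SetLike.exists_of_lt (show W < ⊤ from lt_top_iff_ne_top.2 hne)
    have hv0 : v ≠ 0 := fun h => hv (h ▸ W.zero_mem)
    set W2 := W ⊔ (ℝ ∙ v) with hW2
    have hvW2 : v ∈ W2 := Submodule.mem_sup_right (Submodule.mem_span_singleton_self v)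
    have hle : W < W2 := lt_of_le_of_ne le_sup_left (by intro h; rw [h] at hv; exact hv hvW2)
    have hub : finrank ℝ W2 ≤ finrank ℝ W + 1 := by
      have h5 := Submodule.finrank_sup_add_finrank_inf_eq W (ℝ ∙ v)
      rw [finrank_span_singleton hv0] at h5
      rw [hW2]
      omega
    have hlb : finrank ℝ W + 1 ≤ finrank ℝ W2 := Submodule.finrank_lt_finrank_of_lt hle
    obtain ⟨W', hWW', hW'⟩ := ih W2 (by omega) (by omega)
    exact ⟨W', hle.le.trans hWW', hW'⟩

lemma exists_isometry_factor {d r : ℕ} (hrd : r ≤ d) (X : Matrix (Fin d) (Fin d) ℝ)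
    (hrank : X.rank ≤ r) :
    ∃ T : EuclideanSpace ℝ (Fin r) →L[ℝ] EuclideanSpace ℝ (Fin d),
      (∀ v, ‖T v‖ = ‖v‖) ∧ ∃ M : Matrix (Fin r) (Fin d) ℝ, X = matC T * M ∧ fnorm M = fnorm X := by
  classical
  set e := WithLp.linearEquiv 2 ℝ (Fin d → ℝ) with he
  set W : Submodule ℝ (EuclideanSpace ℝ (Fin d)) :=
    (LinearMap.range X.mulVecLin).map (e.symm : (Fin d → ℝ) →ₗ[ℝ] EuclideanSpace ℝ (Fin d))
    with hW
  have hWr : finrank ℝ W ≤ r := by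
    rw [hW, LinearEquiv.finrank_map_eq]
    exact hrank
  have hdim : r ≤ finrank ℝ (EuclideanSpace ℝ (Fin d)) := by
    simpa [finrank_euclideanSpace] using hrd
  obtain ⟨W', hWW', hW'r⟩ := exists_superset_finrank W hWr hdim
  let b : OrthonormalBasis (Fin r) ℝ W' := (stdOrthonormalBasis ℝ W').reindex (finCongr hW'r)
  let L : EuclideanSpace ℝ (Fin r) →ₗᵢ[ℝ] EuclideanSpace ℝ (Fin d) :=
    W'.subtypeₗᵢ.comp b.repr.symm.toLinearIsometry
  have hcol : ∀ j, colE X j ∈ W' := by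
    intro j
    apply hWW'
    rw [hW]
    refine Submodule.mem_map.2 ⟨X.mulVec (Pi.single j 1), ⟨Pi.single j 1, by
      simp [Matrix.mulVecLin_apply]⟩, ?_⟩
    have : X.mulVec (Pi.single j 1) = Xᵀ j := Matrix.mulVec_single_one X j
    rw [this]
    rfl
  have hz : ∀ j, L (b.repr ⟨colE X j, hcol j⟩) = colE X j := by
    intro j
    simp [L, LinearIsometry.coe_comp]
  set z : Fin d → EuclideanSpace ℝ (Fin r) := fun j => b.repr ⟨colE X j, hcol j⟩ with hzdef
  set T := L.toContinuousLinearMap with hT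
  have hTL : ∀ v, T v = L v := fun v => rfl
  set M : Matrix (Fin r) (Fin d) ℝ := (matC T)ᵀ * X with hM
  have hMz : ∀ i j, M i j = z j i := by
    intro i j
    have step1 : M i j = ⟪L (EuclideanSpace.single i 1), colE X j⟫ := by
      rw [hM, PiLp.inner_apply]
      simp only [Matrix.mul_apply, Matrix.transpose_apply, RCLike.inner_apply, conj_trivial]
      refine Finset.sum_congr rfl fun a _ => ?_
      rw [matC, colE_apply]
      rw [mul_comm]; rfl
    rw [step1, ← hz j, LinearIsometry.inner_map_map, EuclideanSpace.inner_single_left]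
    simp
    rfl
  have hXM : X = matC T * M := by
    funext i j
    have : (matC T * M) i j = (matC T).mulVec ((WithLp.equiv 2 _) (z j)) i := by
      rw [Matrix.mul_apply]
      refine Finset.sum_congr rfl fun k _ => ?_
      rw [hMz k j]
      rfl
    rw [this, matC_mulVec, hTL]
    have : (WithLp.equiv 2 (Fin d → ℝ)) (L (z j)) i = L (z j) i := rfl
    rw [this, hz j, colE_apply]
  have hfn : fnorm M = fnorm X := by
    have h2 : fnorm M ^ 2 = fnorm X ^ 2 := by
      rw [fnorm_sq, fnorm_sq]
      refine Finset.sum_congr rfl fun j _ => ?_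
      have hcolM : colE M j = z j := by ext i; exact hMz i j
      rw [hcolM, ← hz j, L.norm_map]
    have := fnorm_nonneg M
    have := fnorm_nonneg X
    nlinarith
  exact ⟨T, fun v => L.norm_map v, M, hXM, hfn⟩

lemma fnorm_add_le {m n : ℕ} (A B : Matrix (Fin m) (Fin n) ℝ) :
    fnorm (A + B) ≤ fnorm A + fnorm B :=
  norm_add_le (fromMat A) (fromMat B)

lemma main_aux (d r : ℕ) (hrd : r ≤ d) (ε : ℝ) (hε0 : 0 < ε) (hε1 : ε ≤ 1) :
    ∃ N : Finset (Matrix (Fin d) (Fin d) ℝ),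
      (∀ X ∈ N, X.rank ≤ r ∧ frobNorm X = 1)
      ∧ (N.card : ℝ) ≤ (9 / ε) ^ ((2 * d + 1) * r)
      ∧ ∀ X : Matrix (Fin d) (Fin d) ℝ, X.rank ≤ r → frobNorm X = 1 →
          ∃ Xbar ∈ N, frobNorm (X - Xbar) ≤ ε := by
  classical
  set δ := ε / 3 with hδ
  have hδ0 : 0 < δ := by positivity
  have hδ1 : δ ≤ 1 := by rw [hδ]; linarith
  have h9 : 3 / δ = 9 / ε := by rw [hδ]; field_simp; ring
  have h91 : (1:ℝ) ≤ 9 / ε := (one_le_div hε0).2 (by linarith)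
  -- net for the isometries
  set SO : Set (EuclideanSpace ℝ (Fin r) →L[ℝ] EuclideanSpace ℝ (Fin d)) :=
    {T | ∀ v, ‖T v‖ = ‖v‖} with hSO
  have hSOball : SO ⊆ Metric.closedBall 0 1 := by
    intro T hT
    rw [Metric.mem_closedBall, dist_zero_right]
    exact ContinuousLinearMap.opNorm_le_bound T zero_le_one fun v => by rw [hT v, one_mul]
  obtain ⟨NO, hNO_sub, hNO_card, hNO_net⟩ := exists_net_of_subset_unitBall SO hSOball hδ0 hδ1
  -- net for the sphere
  set SM : Set (EuclideanSpace ℝ (Fin r × Fin d)) := {f | ‖f‖ = 1} with hSM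
  have hSMball : SM ⊆ Metric.closedBall 0 1 := fun f hf => by
    rw [Metric.mem_closedBall, dist_zero_right]; exact le_of_eq hf
  obtain ⟨NM, hNM_sub, hNM_card, hNM_net⟩ := exists_net_of_subset_unitBall SM hSMball hδ0 hδ1
  -- dimensions
  have hfr : finrank ℝ (EuclideanSpace ℝ (Fin r) →L[ℝ] EuclideanSpace ℝ (Fin d)) = r * d := by
    rw [← LinearEquiv.finrank_eq
      (LinearMap.toContinuousLinearMap :
        (EuclideanSpace ℝ (Fin r) →ₗ[ℝ] EuclideanSpace ℝ (Fin d)) ≃ₗ[ℝ] _)]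
    rw [Module.finrank_linearMap, finrank_euclideanSpace, finrank_euclideanSpace]
    simp
  have hfm : finrank ℝ (EuclideanSpace ℝ (Fin r × Fin d)) = r * d := by
    rw [finrank_euclideanSpace]; simp
  rw [hfr, h9] at hNO_card
  rw [hfm, h9] at hNM_card
  -- the net
  set N : Finset (Matrix (Fin d) (Fin d) ℝ) :=
    (NO ×ˢ NM).image (fun p => matC p.1 * toMat p.2) with hN
  have hSOmul : ∀ T ∈ SO, ∀ v : EuclideanSpace ℝ (Fin r),
      ‖((WithLp.equiv 2 (Fin d → ℝ)).symm ((matC T).mulVec ((WithLp.equiv 2 _) v)) :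
        EuclideanSpace ℝ (Fin d))‖ = ‖v‖ := by
    intro T hT v
    rw [matC_mulVec, Equiv.symm_apply_apply]
    exact hT v
  refine ⟨N, ?_, ?_, ?_⟩
  · -- membership
    intro Xb hXb
    obtain ⟨⟨T, m⟩, hmem, rfl⟩ := Finset.mem_image.1 hXb
    obtain ⟨hTN, hmN⟩ := Finset.mem_product.1 hmem
    have hTSO : T ∈ SO := hNO_sub hTN
    have hm1 : ‖m‖ = 1 := hNM_sub hmN
    constructor
    · exact (Matrix.rank_mul_le_right _ _).trans
        ((Matrix.rank_le_card_height _).trans (by simp))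
    · rw [frobNorm_eq_fnorm, fnorm_mul_eq (hSOmul T hTSO)]
      show ‖fromMat (toMat m)‖ = 1
      rw [fromMat_toMat]
      exact hm1
  · -- cardinality
    have hcard : (N.card : ℝ) ≤ (NO.card : ℝ) * NM.card := by
      have := (Finset.card_image_le (s := NO ×ˢ NM)
        (f := fun p => matC p.1 * toMat p.2)).trans (le_of_eq (Finset.card_product NO NM))
      exact_mod_cast this
    have h90 : (0:ℝ) ≤ 9/ε := by positivity
    have hexp : r*d + r*d ≤ (2*d+1)*r := by
      have h : (2*d+1)*r = r*d + r*d + r := by ring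
      linarith
    calc (N.card : ℝ) ≤ (NO.card : ℝ) * NM.card := hcard
      _ ≤ (9/ε) ^ (r*d) * (9/ε) ^ (r*d) :=
          mul_le_mul hNO_card hNM_card (Nat.cast_nonneg _) (pow_nonneg h90 _)
      _ = (9/ε) ^ (r*d + r*d) := (pow_add _ _ _).symm
      _ ≤ (9/ε) ^ ((2*d+1)*r) := pow_le_pow_right₀ h91 hexp
  · -- net property
    intro X hrank hXn
    have hXf : fnorm X = 1 := by rw [← frobNorm_eq_fnorm]; exact hXn
    obtain ⟨T, hTiso, M, hXM, hMn⟩ := exists_isometry_factor hrd X hrank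
    have hTSO : T ∈ SO := hTiso
    obtain ⟨Tb, hTbN, hdT⟩ := hNO_net T hTSO
    have hfM : fromMat M ∈ SM := by
      show ‖fromMat M‖ = 1
      show fnorm M = 1
      rw [hMn]; exact hXf
    obtain ⟨mb, hmbN, hdm⟩ := hNM_net (fromMat M) hfM
    refine ⟨matC Tb * toMat mb, Finset.mem_image.2 ⟨(Tb, mb),
      Finset.mem_product.2 ⟨hTbN, hmbN⟩, rfl⟩, ?_⟩
    have hTbSO : Tb ∈ SO := hNO_sub hTbN
    have split : X - matC Tb * toMat mb
        = (matC T - matC Tb) * M + matC Tb * (M - toMat mb) := by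
      rw [hXM, Matrix.sub_mul, Matrix.mul_sub]
      abel
    have hterm1 : fnorm ((matC T - matC Tb) * M) ≤ δ * fnorm M := by
      refine fnorm_mul_le hδ0.le ?_ M
      intro v
      rw [← matC_sub, matC_mulVec, Equiv.symm_apply_apply]
      calc ‖(T - Tb) v‖ ≤ ‖T - Tb‖ * ‖v‖ := (T - Tb).le_opNorm v
        _ ≤ δ * ‖v‖ := by
            apply mul_le_mul_of_nonneg_right _ (norm_nonneg v)
            rw [← dist_eq_norm]
            exact hdT
    have hterm2 : fnorm (matC Tb * (M - toMat mb)) ≤ δ := by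
      rw [fnorm_mul_eq (hSOmul Tb hTbSO)]
      show ‖fromMat (M - toMat mb)‖ ≤ δ
      rw [fromMat_sub, fromMat_toMat, ← dist_eq_norm]
      exact hdm
    rw [frobNorm_eq_fnorm, split]
    calc fnorm ((matC T - matC Tb) * M + matC Tb * (M - toMat mb))
        ≤ fnorm ((matC T - matC Tb) * M) + fnorm (matC Tb * (M - toMat mb)) := fnorm_add_le _ _
      _ ≤ δ * fnorm M + δ := add_le_add hterm1 hterm2
      _ ≤ ε := by
          rw [hMn, hXf, mul_one, hδ]
          linarith


end Aux

/-- The set of rank-`≤ r` unit-Frobenius-norm `d×d` matrices admits an `ε`-net of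
cardinality at most `(9/ε)^((2d+1)r)`. -/
theorem low_rank_sphere_covering
    (d r : ℕ) (ε : ℝ) (hε0 : 0 < ε) (hε1 : ε ≤ 1) :
    ∃ N : Finset (Matrix (Fin d) (Fin d) ℝ),
      (∀ X ∈ N, X.rank ≤ r ∧ frobNorm X = 1)
      ∧ (N.card : ℝ) ≤ (9 / ε) ^ ((2 * d + 1) * r)
      ∧ ∀ X : Matrix (Fin d) (Fin d) ℝ, X.rank ≤ r → frobNorm X = 1 →
          ∃ Xbar ∈ N, frobNorm (X - Xbar) ≤ ε := by
  rcases le_or_gt r d with hrd | hrd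
  · exact main_aux d r hrd ε hε0 hε1
  · obtain ⟨N, h1, h2, h3⟩ := main_aux d d le_rfl ε hε0 hε1
    have h91 : (1:ℝ) ≤ 9 / ε := (one_le_div hε0).2 (by linarith)
    refine ⟨N, fun X hX => ⟨(h1 X hX).1.trans hrd.le, (h1 X hX).2⟩, ?_, ?_⟩
    · exact h2.trans (pow_le_pow_right₀ h91 (Nat.mul_le_mul_left _ hrd.le))
    · intro X hr1 hn1
      exact h3 X ((Matrix.rank_le_card_width X).trans (by simp)) hn1
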